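/- Let d ≤ m be positive integers, H a d×m real matrix with rank d (full row rank), R a symmetric positive definite d×d real matrix, Σ₀ a symmetric positive definite m×m real matrix, μ₀ ∈ ℝ^m, ŷ = Hμ₀, Σ₁ = (Σ₀⁻¹ + Hᵀ R⁻¹ H)⁻¹, K = Σ₁ Hᵀ R⁻¹, and fix y ∈ ℝ^d. Define PIF(y^c) = (1/2)(y − y^c)ᵀ Kᵀ Σ₁⁻¹ K (y − y^c). Then the d×d matrix A = Kᵀ Σ₁⁻¹ K is symmetric positive definite, and there exists λ > 0 such that for all y^c ∈ ℝ^d: PIF(y^c) ≥ (λ/2)·‖y − y^c‖₂². Consequently PIF(y^c) → ∞ as ‖y − y^c‖₂ → ∞. -/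

import Mathlib

open Matrix

/-- The Kalman posterior precision `Σ₁⁻¹ = Σ₀⁻¹ + Hᵀ R⁻¹ H`. -/
noncomputable def kfPrec {d m : ℕ} (H : Matrix (Fin d) (Fin m) ℝ)
    (R : Matrix (Fin d) (Fin d) ℝ) (S0 : Matrix (Fin m) (Fin m) ℝ) :
    Matrix (Fin m) (Fin m) ℝ :=
  S0⁻¹ + Hᵀ * R⁻¹ * H

/-- The Kalman gain `K = Σ₁ Hᵀ R⁻¹`. -/
noncomputable def kfGain {d m : ℕ} (H : Matrix (Fin d) (Fin m) ℝ)
    (R : Matrix (Fin d) (Fin d) ℝ) (S0 : Matrix (Fin m) (Fin m) ℝ) :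
    Matrix (Fin m) (Fin d) ℝ :=
  (kfPrec H R S0)⁻¹ * Hᵀ * R⁻¹

/-- The posterior influence function of the standard Kalman filter,
`PIF(y^c) = (1/2)(y − y^c)ᵀ Kᵀ Σ₁⁻¹ K (y − y^c)`. -/
noncomputable def kfPIF {d m : ℕ} (H : Matrix (Fin d) (Fin m) ℝ)
    (R : Matrix (Fin d) (Fin d) ℝ) (S0 : Matrix (Fin m) (Fin m) ℝ)
    (y yc : Fin d → ℝ) : ℝ :=
  (1 / 2) * ((y - yc) ⬝ᵥ ((kfGain H R S0)ᵀ * kfPrec H R S0 * kfGain H R S0).mulVec (y - yc))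

private lemma posDef_lower_aux {d : ℕ} (hd : 0 < d) {A : Matrix (Fin d) (Fin d) ℝ}
    (hA : A.PosDef) :
    ∃ l : ℝ, 0 < l ∧ ∀ x : Fin d → ℝ, l * (x ⬝ᵥ x) ≤ x ⬝ᵥ A.mulVec x := by
  classical
  set e := WithLp.equiv 2 (Fin d → ℝ) with he
  set f : EuclideanSpace ℝ (Fin d) → ℝ := fun x => (e x) ⬝ᵥ A.mulVec (e x) with hf
  have h1 : Continuous fun y : Fin d → ℝ => y ⬝ᵥ A.mulVec y := by
    simp only [dotProduct, Matrix.mulVec]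
    exact continuous_finset_sum _ fun i _ =>
      (continuous_apply i).mul (continuous_finset_sum _ fun j _ =>
        (continuous_const.mul (continuous_apply j)))
  have hcont : Continuous f := h1.comp (PiLp.continuous_ofLp 2 _)
  have hmem : EuclideanSpace.single (⟨0, hd⟩ : Fin d) (1 : ℝ) ∈
      Metric.sphere (0 : EuclideanSpace ℝ (Fin d)) 1 := by
    simp [mem_sphere_zero_iff_norm, EuclideanSpace.norm_single]
  obtain ⟨u, huS, hmin⟩ := (isCompact_sphere (0 : EuclideanSpace ℝ (Fin d)) 1).exists_isMinOn
    ⟨_, hmem⟩ hcont.continuousOn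
  have hu1 : ‖u‖ = 1 := mem_sphere_zero_iff_norm.mp huS
  have hu0 : (e u) ≠ 0 := by
    intro h
    have : u = 0 := by
      ext i
      have := congrFun h i
      exact this
    rw [this] at hu1; simp at hu1
  have hlpos : 0 < f u := by
    have := hA.dotProduct_mulVec_pos hu0
    simpa [hf, star_trivial] using this
  refine ⟨f u, hlpos, fun x => ?_⟩
  by_cases hx : x = 0
  · simp [hx]
  · set xE : EuclideanSpace ℝ (Fin d) := e.symm x with hxE
    have hex : e xE = x := e.apply_symm_apply x
    have hxE0 : xE ≠ 0 := by
      intro h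
      apply hx
      rw [← hex, h]
      ext i; simp [he]
    set c : ℝ := ‖xE‖ with hc
    have hcpos : 0 < c := norm_pos_iff.mpr hxE0
    have hmem' : c⁻¹ • xE ∈ Metric.sphere (0 : EuclideanSpace ℝ (Fin d)) 1 := by
      rw [mem_sphere_zero_iff_norm, norm_smul, norm_inv, norm_norm, ← hc]
      field_simp
    have hle : f u ≤ f (c⁻¹ • xE) := hmin hmem'
    have hsmul : e (c⁻¹ • xE) = c⁻¹ • x := by
      rw [← hex]; rfl
    have hfval : f (c⁻¹ • xE) = c⁻¹ * (c⁻¹ * (x ⬝ᵥ A.mulVec x)) := by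
      simp [hf, hsmul, hex, smul_dotProduct, Matrix.mulVec_smul,
        dotProduct_smul, smul_eq_mul]
    have hxx : x ⬝ᵥ x = c ^ 2 := by
      have h2 : (inner ℝ xE xE : ℝ) = ‖xE‖ ^ 2 := real_inner_self_eq_norm_sq xE
      rw [hc, ← h2]
      simp [PiLp.inner_apply, dotProduct, RCLike.inner_apply]
      rw [EuclideanSpace.norm_eq, Real.sq_sqrt (by positivity)]
      refine Finset.sum_congr rfl fun i _ => ?_
      rw [Real.norm_eq_abs, sq_abs, sq, ← hex]; rfl
    have key : f u * c ^ 2 ≤ x ⬝ᵥ A.mulVec x := by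
      have := mul_le_mul_of_nonneg_right hle (le_of_lt (by positivity : (0:ℝ) < c ^ 2))
      calc f u * c ^ 2 ≤ f (c⁻¹ • xE) * c ^ 2 := this
        _ = x ⬝ᵥ A.mulVec x := by
            rw [hfval]
            have : c ≠ 0 := ne_of_gt hcpos
            field_simp
    rw [hxx]; exact key

/-- Quantitative lower bound from Lemma D.1: the matrix `A = Kᵀ Σ₁⁻¹ K` is symmetric
positive definite, and there is a `λ > 0` with
`PIF(y^c) ≥ (λ/2)·‖y − y^c‖₂²` for every contamination `y^c`. -/
theorem kf_pif_lower_bound {d m : ℕ} (hd : 0 < d) (hm : 0 < m) (hdm : d ≤ m)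
    (H : Matrix (Fin d) (Fin m) ℝ) (hH : H.rank = d)
    (R : Matrix (Fin d) (Fin d) ℝ) (hR : R.PosDef)
    (S0 : Matrix (Fin m) (Fin m) ℝ) (hS0 : S0.PosDef)
    (μ₀ : Fin m → ℝ) (y : Fin d → ℝ) :
    ((kfGain H R S0)ᵀ * kfPrec H R S0 * kfGain H R S0).PosDef ∧
    ∃ l : ℝ, 0 < l ∧ ∀ yc : Fin d → ℝ,
      (l / 2) * ((y - yc) ⬝ᵥ (y - yc)) ≤ kfPIF H R S0 y yc := by
  classical
  set P := kfPrec H R S0 with hPdef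
  set K := kfGain H R S0 with hKdef
  -- P is positive definite
  have hRinv : (R⁻¹).PosDef := hR.inv
  have hHRH : (Hᵀ * R⁻¹ * H).PosSemidef := by
    have := hRinv.posSemidef.conjTranspose_mul_mul_same H
    rwa [conjTranspose_eq_transpose_of_trivial] at this
  have hP : P.PosDef := by
    rw [hPdef, kfPrec]
    exact (hS0.inv).add_posSemidef hHRH
  -- K has injective mulVec
  have hHt : Function.Injective (Hᵀ).mulVec := by
    rw [Matrix.mulVec_injective_iff]
    rw [linearIndependent_iff_card_eq_finrank_span]
    have : (Set.range Hᵀ.col) = Set.range H.row := rfl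
    rw [this, Set.finrank, ← Matrix.rank_eq_finrank_span_row, hH, Fintype.card_fin]
  have hRi : Function.Injective (R⁻¹).mulVec :=
    Matrix.mulVec_injective_iff_isUnit.mpr hRinv.isUnit
  have hPi : Function.Injective (P⁻¹).mulVec :=
    Matrix.mulVec_injective_iff_isUnit.mpr hP.inv.isUnit
  have hKinj : Function.Injective K.mulVec := by
    have hcomp : K.mulVec = (P⁻¹).mulVec ∘ (Hᵀ).mulVec ∘ (R⁻¹).mulVec := by
      funext x
      simp [hKdef, kfGain, Matrix.mulVec_mulVec, Function.comp, hPdef, Matrix.mul_assoc]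
    rw [hcomp]
    exact hPi.comp (hHt.comp hRi)
  -- A = Kᵀ P K is positive definite
  have hA : (Kᵀ * P * K).PosDef := by
    refine Matrix.PosDef.of_dotProduct_mulVec_pos ?_ ?_
    · rw [← conjTranspose_eq_transpose_of_trivial K]
      exact Matrix.isHermitian_conjTranspose_mul_mul K hP.1
    · intro x hx
      have hKx : K.mulVec x ≠ 0 := by
        intro h
        exact hx (hKinj (by simpa using h))
      have := hP.dotProduct_mulVec_pos hKx
      have heq : star x ⬝ᵥ (Kᵀ * P * K).mulVec x
          = star (K.mulVec x) ⬝ᵥ P.mulVec (K.mulVec x) := by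
        simp only [star_trivial, ← Matrix.mulVec_mulVec, Matrix.dotProduct_mulVec (R := ℝ)]
        rw [Matrix.vecMul_transpose, ← Matrix.dotProduct_mulVec]
      rw [heq]
      exact this
  refine ⟨hA, ?_⟩
  obtain ⟨l, hl, hbound⟩ := posDef_lower_aux hd hA
  refine ⟨l, hl, fun yc => ?_⟩
  have := hbound (y - yc)
  rw [kfPIF]
  rw [← hPdef, ← hKdef]
  linarith
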